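/- Let G'=(V',E') be a directed graph without self-loops in which every node has in-degree 2 and out-degree 2, and such that for every ordered pair of distinct nodes u,v there exist two edge-disjoint directed paths from u to v. Let e ∈ E' and let F be a frame for e. Define x^{(e)} ∈ ℝ^{E'} by x^{(e)}_e = 1, x^{(e)}_{e'} = 1/2 for e' ∈ F, and x^{(e)}_{e'} = 3/4 for all remaining edges e'. Then x^{(e)} ∈ AT_bal(G'). -/

import Mathlib

open Finset

namespace TSPGap


/-! ### Lovász–Schrijver lift-and-project operators -/

/-- `cone(R) = {(λ, λx) : λ ≥ 0, x ∈ R}`, with the extra 0th coordinate first. -/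
def lsCone {ι : Type*} (R : Set (ι → ℝ)) : Set (ℝ × (ι → ℝ)) :=
  {p | ∃ c : ℝ, ∃ y ∈ R, 0 ≤ c ∧ p.1 = c ∧ p.2 = fun i => c * y i}

/-- `X` is a protection matrix witnessing `x ∈ N(R)`: it is symmetric, its 0th row and
diagonal both equal `(1, x)`, and each row `X_i` and difference `X_0 - X_i` lies in `cone(R)`. -/
def IsProtection {ι : Type*} (R : Set (ι → ℝ)) (x : ι → ℝ)
    (X : Option ι → Option ι → ℝ) : Prop :=
  (∀ i j, X i j = X j i) ∧
  X none none = 1 ∧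
  (∀ i, X none (some i) = x i) ∧
  (∀ i, X (some i) (some i) = x i) ∧
  (∀ i, (X (some i) none, fun j => X (some i) (some j)) ∈ lsCone R) ∧
  (∀ i, (X none none - X (some i) none,
         fun j => X none (some j) - X (some i) (some j)) ∈ lsCone R)

/-- The Lovász–Schrijver `N` operator. -/
def lsN {ι : Type*} (R : Set (ι → ℝ)) : Set (ι → ℝ) :=
  {x | ∃ X : Option ι → Option ι → ℝ, IsProtection R x X}

/-- The Lovász–Schrijver `N₊` operator (protection matrix additionally PSD). -/
def lsNplus {ι : Type*} [Fintype ι] (R : Set (ι → ℝ)) : Set (ι → ℝ) :=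
  {x | ∃ X : Matrix (Option ι) (Option ι) ℝ, X.PosSemidef ∧
        IsProtection R x (fun i j => X i j)}

/-! ### Directed graphs -/

variable {V : Type*} [DecidableEq V]

/-- The list of (directed) steps of a walk given by its list of vertices. -/
def dSteps (l : List V) : List (V × V) := l.zip l.tail

/-- The steps of a closed walk given by its list of vertices. -/
def cycSteps (l : List V) : List (V × V) := l.zip (l.rotate 1)

/-- `l` is a directed walk from `u` to `v` using edges of `E`. -/
def IsDWalk (E : Finset (V × V)) (u v : V) (l : List V) : Prop :=
  l.head? = some u ∧ l.getLast? = some v ∧ ∀ a ∈ dSteps l, a ∈ E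

/-- Total weight of a walk. -/
def dWalkWeight (w : V × V → ℝ) (l : List V) : ℝ := ((dSteps l).map w).sum

/-- Shortest-path distance from `u` to `v` in the weighted directed graph `(E, w)`. -/
noncomputable def dDist (E : Finset (V × V)) (w : V × V → ℝ) (u v : V) : ℝ :=
  sInf {c | ∃ l : List V, IsDWalk E u v l ∧ dWalkWeight w l = c}

/-- `x(δ⁺(S))`. -/
def outCut (E : Finset (V × V)) (x : ↥E → ℝ) (S : Finset V) : ℝ :=
  ∑ e ∈ E.attach.filter (fun e => e.val.1 ∈ S ∧ e.val.2 ∉ S), x e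

/-- `x(δ⁻(S))`. -/
def inCut (E : Finset (V × V)) (x : ↥E → ℝ) (S : Finset V) : ℝ :=
  ∑ e ∈ E.attach.filter (fun e => e.val.1 ∉ S ∧ e.val.2 ∈ S), x e

/-- `d · x = ∑_e d_e x_e` over the edge set `E`. -/
def dDot (E : Finset (V × V)) (d : V × V → ℝ) (x : ↥E → ℝ) : ℝ :=
  ∑ e ∈ E.attach, d e.val * x e

/-- The balanced asymmetric tour polytope of the directed graph with node set `VS`
and edge set `E`. -/
def ATbal (VS : Finset V) (E : Finset (V × V)) : Set (↥E → ℝ) :=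
  {x | (∀ e, 0 ≤ x e ∧ x e ≤ 1) ∧
       (∀ S : Finset V, S ⊆ VS → S.Nonempty → S ≠ VS →
          1 ≤ outCut E x S ∧ 1 ≤ inCut E x S) ∧
       (∀ v ∈ VS, outCut E x {v} = inCut E x {v})}

/-- Indicator vectors of Hamiltonian cycles (on node set `VS`) among edges `E`. -/
def hamCycleVecs (VS : Finset V) (E : Finset (V × V)) : Set (↥E → ℝ) :=
  {x | ∃ c : List V, 2 ≤ c.length ∧ c.Nodup ∧ c.toFinset = VS ∧
        (∀ a ∈ cycSteps c, a ∈ E) ∧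
        ∀ e : ↥E, x e = if e.val ∈ cycSteps c then 1 else 0}

/-- Edge set of the complete directed graph on the node set `VS` (no self-loops). -/
def dComplete (VS : Finset V) : Finset (V × V) := (VS ×ˢ VS).filter (fun e => e.1 ≠ e.2)

/-- Edge set of the complete directed graph on all of `V` (no self-loops). -/
def dCompleteAll (V : Type*) [Fintype V] [DecidableEq V] : Finset (V × V) :=
  Finset.univ.filter (fun e => e.1 ≠ e.2)

/-- Out-degree of `v` in edge set `E`. -/
def outDeg (E : Finset (V × V)) (v : V) : ℕ := (E.filter (fun e => e.1 = v)).card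

/-- In-degree of `v` in edge set `E`. -/
def inDeg (E : Finset (V × V)) (v : V) : ℕ := (E.filter (fun e => e.2 = v)).card

/-- A frame for the edge `e = (u,v)`: a set `F ⊆ E \ {e}` consisting of an edge-simple
path from `u` to `v` together with zero or more edge-simple cycles, all pairwise
edge-disjoint. -/
def IsFrame (E : Finset (V × V)) (e : V × V) (F : Finset (V × V)) : Prop :=
  F ⊆ E.erase e ∧
  ∃ (p : List V) (cs : List (List V)),
    p.head? = some e.1 ∧ p.getLast? = some e.2 ∧ (∀ a ∈ dSteps p, a ∈ E) ∧
    (∀ c ∈ cs, c ≠ [] ∧ ∀ a ∈ cycSteps c, a ∈ E) ∧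
    (dSteps p ++ (cs.map cycSteps).flatten).Nodup ∧
    F = (dSteps p ++ (cs.map cycSteps).flatten).toFinset

/-- There exist two edge-disjoint directed (simple) paths from `u` to `v` in `E`. -/
def TwoEdgeDisjointPaths (E : Finset (V × V)) (u v : V) : Prop :=
  ∃ p q : List V, p.Nodup ∧ q.Nodup ∧
    p.head? = some u ∧ p.getLast? = some v ∧
    q.head? = some u ∧ q.getLast? = some v ∧
    (∀ a ∈ dSteps p, a ∈ E) ∧ (∀ a ∈ dSteps q, a ∈ E) ∧
    (dSteps p).Disjoint (dSteps q)




/-! ### The Charikar–Goemans–Karloff graphs -/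

/-- Vertex type housing the graph `G_{k,r}` (index `k = 0` is a dummy level). -/
def CGKV : ℕ → Type
  | 0 => PUnit
  | 1 => ℕ
  | k + 2 => (ℕ × CGKV (k + 1)) ⊕ Fin 2

instance CGKV.decEq : (k : ℕ) → DecidableEq (CGKV k)
  | 0 => inferInstanceAs (DecidableEq PUnit)
  | 1 => inferInstanceAs (DecidableEq ℕ)
  | k + 2 =>
      letI : DecidableEq (CGKV (k + 1)) := CGKV.decEq (k + 1)
      inferInstanceAs (DecidableEq ((ℕ × CGKV (k + 1)) ⊕ Fin 2))

/-- The source of `G_{k,r}`. -/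
def CGKsrc (r : ℕ) : (k : ℕ) → CGKV k
  | 0 => PUnit.unit
  | 1 => (0 : ℕ)
  | _ + 2 => Sum.inr 0

/-- The sink of `G_{k,r}`. -/
def CGKsnk (r : ℕ) : (k : ℕ) → CGKV k
  | 0 => PUnit.unit
  | 1 => (r + 1 : ℕ)
  | _ + 2 => Sum.inr 1

/-- The node set of `G_{k,r}`. -/
def CGKVS (r : ℕ) : (k : ℕ) → Finset (CGKV k)
  | 0 => ∅
  | 1 => Finset.range (r + 2)
  | k + 2 =>
      ((Finset.range r) ×ˢ CGKVS r (k + 1)).image Sum.inl ∪ {Sum.inr 0, Sum.inr 1}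

/-- The edge set of `G_{k,r}`: at level 1, two oppositely-directed paths of `r+1` edges
on the nodes `0, …, r+1`; at level `k+2`, the edges of the `r` copies of `G_{k+1,r}`
together with a path from the source `s` through the copies' sources to the sink `t`,
and a path from `t` through the copies' sinks (in the opposite order) back to `s`. -/
def CGKE (r : ℕ) : (k : ℕ) → Finset (CGKV k × CGKV k)
  | 0 => ∅
  | 1 => (dSteps (List.range (r + 2))).toFinset ∪
         (dSteps (List.range (r + 2)).reverse).toFinset
  | k + 2 =>
      (Finset.range r).biUnion
        (fun j => (CGKE r (k + 1)).image (fun e => (Sum.inl (j, e.1), Sum.inl (j, e.2)))) ∪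
      (dSteps (Sum.inr 0 ::
        ((List.range r).map (fun j => Sum.inl (j, CGKsrc r (k + 1)))) ++ [Sum.inr 1])).toFinset ∪
      (dSteps (Sum.inr 1 ::
        (((List.range r).map (fun j => Sum.inl (j, CGKsnk r (k + 1)))).reverse) ++ [Sum.inr 0])).toFinset

/-- Edge weights of `G_{k,r}` (and of `L_{k,r}`): level-`ℓ` edges have weight `r^(ℓ-1)`. -/
def CGKw (r : ℕ) : (k : ℕ) → CGKV k × CGKV k → ℝ
  | 0, _ => 0
  | 1, _ => 1
  | k + 2, e =>
      match e with
      | (Sum.inl (j, u), Sum.inl (j', v)) =>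
          if j = j' then CGKw r (k + 1) (u, v) else (r : ℝ) ^ (k + 1)
      | _ => (r : ℝ) ^ (k + 1)

/-- `v₁`: the successor of `s` on the forward path of `G_{k,r}`. -/
def Lv1 (r : ℕ) : (k : ℕ) → CGKV k
  | 0 => PUnit.unit
  | 1 => (1 : ℕ)
  | k + 2 => Sum.inl (0, CGKsrc r (k + 1))

/-- `v₂`: the predecessor of `t` on the forward path of `G_{k,r}`. -/
def Lv2 (r : ℕ) : (k : ℕ) → CGKV k
  | 0 => PUnit.unit
  | 1 => (r : ℕ)
  | k + 2 => Sum.inl (r - 1, CGKsrc r (k + 1))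

/-- `v₃`: the successor of `t` on the backward path of `G_{k,r}`. -/
def Lv3 (r : ℕ) : (k : ℕ) → CGKV k
  | 0 => PUnit.unit
  | 1 => (r : ℕ)
  | k + 2 => Sum.inl (r - 1, CGKsnk r (k + 1))

/-- `v₄`: the predecessor of `s` on the backward path of `G_{k,r}`. -/
def Lv4 (r : ℕ) : (k : ℕ) → CGKV k
  | 0 => PUnit.unit
  | 1 => (1 : ℕ)
  | k + 2 => Sum.inl (0, CGKsnk r (k + 1))

/-- The node set `V_{k,r}` of `L_{k,r}`: the nodes of `G_{k,r}` minus the two terminals. -/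
def LVS (r k : ℕ) : Finset (CGKV k) :=
  ((CGKVS r k).erase (CGKsrc r k)).erase (CGKsnk r k)

/-- The edge set `E_{k,r}` of `L_{k,r}`: the edges of `G_{k,r}` not incident to a terminal,
plus the two new edges `(v₂,v₁)` and `(v₄,v₃)`. -/
def LE (r k : ℕ) : Finset (CGKV k × CGKV k) :=
  (CGKE r k).filter (fun e =>
    e.1 ≠ CGKsrc r k ∧ e.1 ≠ CGKsnk r k ∧ e.2 ≠ CGKsrc r k ∧ e.2 ≠ CGKsnk r k) ∪
  {(Lv2 r k, Lv1 r k), (Lv4 r k, Lv3 r k)}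



/-! ### Undirected graphs -/

variable {V : Type*} [DecidableEq V]

/-- The (undirected) steps of a walk given by its list of vertices. -/
def uSteps (l : List V) : List (Sym2 V) := (l.zip l.tail).map (Function.uncurry Sym2.mk)

/-- `l` is a walk from `u` to `v` in the undirected edge set `E`. -/
def IsUWalk (E : Finset (Sym2 V)) (u v : V) (l : List V) : Prop :=
  l.head? = some u ∧ l.getLast? = some v ∧ ∀ e ∈ uSteps l, e ∈ E

/-- Whether the undirected edge `e` crosses the cut `(S, S̄)`. -/
def uCrosses (S : Finset V) (e : Sym2 V) : Bool :=
  Sym2.lift ⟨fun a b => xor (decide (a ∈ S)) (decide (b ∈ S)),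
    fun a b => Bool.xor_comm _ _⟩ e

/-- `x(δ(S))`. -/
def uCut (E : Finset (Sym2 V)) (x : ↥E → ℝ) (S : Finset V) : ℝ :=
  ∑ e ∈ E.attach.filter (fun e => uCrosses S e.val), x e

/-- `d · x = ∑_e d_e x_e` over the undirected edge set `E`. -/
def uDot (E : Finset (Sym2 V)) (d : Sym2 V → ℝ) (x : ↥E → ℝ) : ℝ :=
  ∑ e ∈ E.attach, d e.val * x e

/-- The symmetric tour polytope of the undirected graph with node set `VS`, edges `E`. -/
def STpoly (VS : Finset V) (E : Finset (Sym2 V)) : Set (↥E → ℝ) :=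
  {x | (∀ e, 0 ≤ x e ∧ x e ≤ 1) ∧
       (∀ S : Finset V, S ⊆ VS → S.Nonempty → S ≠ VS → 2 ≤ uCut E x S) ∧
       (∀ v ∈ VS, uCut E x {v} = 2)}

/-- The symmetric path polytope of the undirected graph with node set `VS`, edges `E`,
and endpoints `s`, `t`. -/
def SPpoly (VS : Finset V) (E : Finset (Sym2 V)) (s t : V) : Set (↥E → ℝ) :=
  {x | (∀ e, 0 ≤ x e ∧ x e ≤ 1) ∧
       (∀ S : Finset V, S ⊆ VS → S.Nonempty → S ≠ VS →
          (((s ∈ S) ↔ (t ∈ S)) → 2 ≤ uCut E x S) ∧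
          (¬((s ∈ S) ↔ (t ∈ S)) → 1 ≤ uCut E x S)) ∧
       (∀ v ∈ VS, v ≠ s → v ≠ t → uCut E x {v} = 2) ∧
       uCut E x {s} = 1 ∧ uCut E x {t} = 1}

/-- Indicator vectors of Hamiltonian paths from `s` to `t` (on node set `VS`) among
edges `E`. -/
def uHamPathVecs (VS : Finset V) (E : Finset (Sym2 V)) (s t : V) : Set (↥E → ℝ) :=
  {x | ∃ p : List V, p.Nodup ∧ p.toFinset = VS ∧
        p.head? = some s ∧ p.getLast? = some t ∧
        (∀ e ∈ uSteps p, e ∈ E) ∧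
        ∀ e : ↥E, x e = if e.val ∈ uSteps p then 1 else 0}

/-- Edge set of the complete undirected graph on all of `V` (no self-loops). -/
def uCompleteAll (V : Type*) [Fintype V] [DecidableEq V] : Finset (Sym2 V) :=
  Finset.univ.filter (fun e => ¬ e.IsDiag)

/-- Shortest-path distance (number of edges) between the endpoints of `e`, in the
unweighted undirected graph with edge set `E`. -/
noncomputable def uDist (E : Finset (Sym2 V)) (e : Sym2 V) : ℝ :=
  sInf {c | ∃ u v : V, e = s(u, v) ∧
    ∃ l : List V, IsUWalk E u v l ∧ ((uSteps l).length : ℝ) = c}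

/-! ### Cheung's graphs -/

/-- The node set `V_{ℓ,q}` of Cheung's graph `G_{ℓ,q}`: a top path and a bottom path of
`ℓ+1` nodes each, a left and a right clique of `3q+3` nodes each, and nodes `s`, `t`. -/
inductive ChV (l q : ℕ) where
  | top : Fin (l + 1) → ChV l q
  | bot : Fin (l + 1) → ChV l q
  | left : Fin (3 * q + 3) → ChV l q
  | right : Fin (3 * q + 3) → ChV l q
  | vs : ChV l q
  | vt : ChV l q
deriving DecidableEq, Fintype

/-- The edges of the two paths of `G_{ℓ,q}`. -/
def ChEpaths (l q : ℕ) : Finset (Sym2 (ChV l q)) :=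
  (Finset.univ : Finset (Fin l)).image
    (fun i => s(ChV.top i.castSucc, ChV.top i.succ)) ∪
  (Finset.univ : Finset (Fin l)).image
    (fun i => s(ChV.bot i.castSucc, ChV.bot i.succ))

/-- The edges within the two cliques of `G_{ℓ,q}`. -/
def ChEcliques (l q : ℕ) : Finset (Sym2 (ChV l q)) :=
  ((Finset.univ : Finset (Fin (3 * q + 3) × Fin (3 * q + 3))).filter
      (fun p => p.1 ≠ p.2)).image (fun p => s(ChV.left p.1, ChV.left p.2)) ∪
  ((Finset.univ : Finset (Fin (3 * q + 3) × Fin (3 * q + 3))).filter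
      (fun p => p.1 ≠ p.2)).image (fun p => s(ChV.right p.1, ChV.right p.2))

/-- The connection edges of `G_{ℓ,q}`: path endpoints to the cliques, `s` to the left
clique, and `t` to the right clique. -/
def ChEconn (l q : ℕ) : Finset (Sym2 (ChV l q)) :=
  (Finset.univ : Finset (Fin (3 * q + 3))).image (fun i => s(ChV.top 0, ChV.left i)) ∪
  (Finset.univ : Finset (Fin (3 * q + 3))).image (fun i => s(ChV.bot 0, ChV.left i)) ∪
  (Finset.univ : Finset (Fin (3 * q + 3))).image
    (fun i => s(ChV.top (Fin.last l), ChV.right i)) ∪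
  (Finset.univ : Finset (Fin (3 * q + 3))).image
    (fun i => s(ChV.bot (Fin.last l), ChV.right i)) ∪
  (Finset.univ : Finset (Fin (3 * q + 3))).image (fun i => s(ChV.vs, ChV.left i)) ∪
  (Finset.univ : Finset (Fin (3 * q + 3))).image (fun i => s(ChV.vt, ChV.right i))

/-- The edge set `E_{ℓ,q}` of Cheung's graph `G_{ℓ,q}`. -/
def ChE (l q : ℕ) : Finset (Sym2 (ChV l q)) :=
  ChEpaths l q ∪ ChEcliques l q ∪ ChEconn l q

/-- The node set of `G'_{ℓ,q}`: `G_{ℓ,q}` plus `ℓ-1` new internal path nodes. -/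
inductive ChV' (l q : ℕ) where
  | old : ChV l q → ChV' l q
  | mid : Fin (l - 1) → ChV' l q
deriving DecidableEq, Fintype

/-- The new `s`–`t` path of `G'_{ℓ,q}` (as a list of nodes; it has `ℓ` edges). -/
def ChPathList (l q : ℕ) : List (ChV' l q) :=
  ChV'.old ChV.vs :: ((List.finRange (l - 1)).map ChV'.mid ++ [ChV'.old ChV.vt])

/-- The edge set `E'_{ℓ,q}` of `G'_{ℓ,q}`: the (old) edges of `G_{ℓ,q}` together with the
`ℓ` new edges of a path from `s` to `t` through `ℓ-1` new nodes. -/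
def ChE' (l q : ℕ) : Finset (Sym2 (ChV' l q)) :=
  (ChE l q).image (Sym2.map ChV'.old) ∪ (uSteps (ChPathList l q)).toFinset


set_option linter.unusedSectionVars false

lemma dSteps_map_fst : ∀ p : List V, (dSteps p).map Prod.fst = p.dropLast
  | [] => rfl
  | [_] => rfl
  | a :: b :: t => by
    have ih := dSteps_map_fst (b :: t)
    simp only [dSteps, List.tail_cons, List.zip_cons_cons, List.map_cons] at ih ⊢
    rw [ih, List.dropLast_cons₂]

lemma dSteps_map_snd (p : List V) : (dSteps p).map Prod.snd = p.tail :=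
  List.map_snd_zip (by cases p <;> simp)

lemma cyc_countP (c : List V) (v : V) :
    (cycSteps c).countP (fun a => a.1 = v) = (cycSteps c).countP (fun a => a.2 = v) := by
  have h1 : (cycSteps c).map Prod.fst = c :=
    List.map_fst_zip (by simp [List.length_rotate])
  have h2 : (cycSteps c).map Prod.snd = c.rotate 1 :=
    List.map_snd_zip (by simp [List.length_rotate])
  have e1 : (cycSteps c).countP (fun a => decide (a.1 = v))
      = c.countP (fun x => decide (x = v)) := by
    conv_rhs => rw [← h1]
    rw [List.countP_map]; rfl
  have e2 : (cycSteps c).countP (fun a => decide (a.2 = v))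
      = (c.rotate 1).countP (fun x => decide (x = v)) := by
    conv_rhs => rw [← h2]
    rw [List.countP_map]; rfl
  have e3 := (List.rotate_perm c 1).countP_eq (fun x => decide (x = v))
  rw [e1, e2, e3]

lemma path_countP (p : List V) (hne : p ≠ []) (v : V) :
    (dSteps p).countP (fun a => a.1 = v) + (if p.getLast hne = v then 1 else 0)
      = (dSteps p).countP (fun a => a.2 = v) + (if p.head hne = v then 1 else 0) := by
  have e1 : (dSteps p).countP (fun a => decide (a.1 = v))
      = p.dropLast.countP (fun x => decide (x = v)) := by
    conv_rhs => rw [← dSteps_map_fst p]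
    rw [List.countP_map]; rfl
  have e2 : (dSteps p).countP (fun a => decide (a.2 = v))
      = p.tail.countP (fun x => decide (x = v)) := by
    conv_rhs => rw [← dSteps_map_snd p]
    rw [List.countP_map]; rfl
  have h1 : p.countP (fun x => decide (x = v))
      = p.dropLast.countP (fun x => decide (x = v)) + (if p.getLast hne = v then 1 else 0) := by
    conv_lhs => rw [← List.dropLast_append_getLast hne]
    rw [List.countP_append]
    by_cases h : p.getLast hne = v <;> simp [h, List.countP_cons]
  have h2 : p.countP (fun x => decide (x = v))
      = p.tail.countP (fun x => decide (x = v)) + (if p.head hne = v then 1 else 0) := by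
    conv_lhs => rw [← List.cons_head_tail hne]
    rw [List.countP_cons]
    by_cases h : p.head hne = v <;> simp [h]
  omega

lemma crossing (S : Finset V) :
    ∀ (l : List V) (u v : V), l.head? = some u → l.getLast? = some v →
      u ∈ S → v ∉ S → ∃ a ∈ dSteps l, a.1 ∈ S ∧ a.2 ∉ S
  | [], u, v, h, _, _, _ => by simp at h
  | [a], u, v, h1, h2, hu, hv => by
      simp only [List.head?_cons, Option.some.injEq] at h1
      simp only [List.getLast?_singleton, Option.some.injEq] at h2
      subst h1; subst h2; exact absurd hu hv
  | a :: b :: rest, u, v, h1, h2, hu, hv => by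
      simp only [List.head?_cons, Option.some.injEq] at h1
      subst h1
      by_cases hb : b ∈ S
      · obtain ⟨s, hs, h⟩ := crossing S (b :: rest) b v rfl
          (by rw [← List.getLast?_cons_cons]; exact h2) hb hv
        refine ⟨s, ?_, h⟩
        simp only [dSteps, List.tail_cons, List.zip_cons_cons, List.mem_cons]
        right; exact hs
      · refine ⟨(a, b), ?_, hu, hb⟩
        simp [dSteps]


lemma card_filter_toFinset {α : Type*} [DecidableEq α] {l : List α} (h : l.Nodup)
    (p : α → Prop) [DecidablePred p] :
    (l.toFinset.filter p).card = l.countP (fun a => decide (p a)) := by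
  rw [List.countP_eq_length_filter,
    ← List.toFinset_card_of_nodup (h.filter (fun a => decide (p a))), List.toFinset_filter]
  congr 1
  simp

lemma frame_count {E : Finset (V × V)} {e : V × V} {F : Finset (V × V)}
    (hF : IsFrame E e F) (v : V) :
    (F.filter (fun a => a.1 = v)).card + (if e.2 = v then 1 else 0)
      = (F.filter (fun a => a.2 = v)).card + (if e.1 = v then 1 else 0) := by
  obtain ⟨-, p, cs, hh, hl, -, -, hnd, hFeq⟩ := hF
  have hne : p ≠ [] := by intro h; rw [h] at hh; simp at hh
  have hhead : p.head hne = e.1 := by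
    rw [List.head?_eq_head hne] at hh; exact Option.some.inj hh
  have hlast : p.getLast hne = e.2 := by
    rw [List.getLast?_eq_getLast hne] at hl; exact Option.some.inj hl
  subst hFeq
  rw [card_filter_toFinset hnd, card_filter_toFinset hnd,
    List.countP_append, List.countP_append, List.countP_flatten, List.countP_flatten]
  have hcyc : ((cs.map cycSteps).map (List.countP (fun a => decide (a.1 = v)))).sum
      = ((cs.map cycSteps).map (List.countP (fun a => decide (a.2 = v)))).sum := by
    congr 1
    apply List.map_congr_left
    intro L hL
    obtain ⟨c, -, rfl⟩ := List.mem_map.1 hL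
    exact cyc_countP c v
  have hp := path_countP p hne v
  rw [hhead, hlast] at hp
  omega

lemma cut_sum (E : Finset (V × V)) (g : V × V → ℝ) (P : V × V → Prop) [DecidablePred P] :
    ∑ e' ∈ E.attach.filter (fun e' => P e'.val), g e'.val = ∑ a ∈ E.filter P, g a := by
  rw [Finset.sum_filter, Finset.sum_filter]
  exact Finset.sum_attach E (fun a => if P a then g a else 0)

theorem stmt6 {V : Type*} [Fintype V] [DecidableEq V] (E : Finset (V × V))
    (hloop : ∀ e ∈ E, e.1 ≠ e.2)
    (hdeg : ∀ v : V, outDeg E v = 2 ∧ inDeg E v = 2)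
    (hpaths : ∀ u v : V, u ≠ v → TwoEdgeDisjointPaths E u v)
    (e : V × V) (he : e ∈ E) (F : Finset (V × V)) (hF : IsFrame E e F) :
    (fun e' : ↥E => if e'.val = e then (1 : ℝ)
                    else if e'.val ∈ F then 1 / 2 else 3 / 4)
      ∈ ATbal Finset.univ E := by
  classical
  set x : ↥E → ℝ := fun e' : ↥E => if e'.val = e then (1 : ℝ)
      else if e'.val ∈ F then 1 / 2 else 3 / 4 with hxdef
  have heF : e ∉ F := fun h => (Finset.mem_erase.mp (hF.1 h)).1 rfl
  have hFE : F ⊆ E := hF.1.trans (Finset.erase_subset e E)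
  have hxhalf : ∀ t : ↥E, 1 / 2 ≤ x t := by
    intro t
    simp only [hxdef]
    split
    · norm_num
    · split <;> norm_num
  -- generic cut bound
  have hcut : ∀ (T : Finset ↥E) (t1 t2 : ↥E), t1 ∈ T → t2 ∈ T → t1 ≠ t2 →
      1 ≤ ∑ t ∈ T, x t := by
    intro T t1 t2 h1 h2 hne
    have hsub : ({t1, t2} : Finset ↥E) ⊆ T := by
      intro t ht
      rcases Finset.mem_insert.mp ht with rfl | ht
      · exact h1
      · rw [Finset.mem_singleton.mp ht]; exact h2
    calc (1 : ℝ) = 1 / 2 + 1 / 2 := by norm_num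
      _ ≤ x t1 + x t2 := by
          have := hxhalf t1; have := hxhalf t2; linarith
      _ = ∑ t ∈ ({t1, t2} : Finset ↥E), x t := (Finset.sum_pair hne).symm
      _ ≤ ∑ t ∈ T, x t := Finset.sum_le_sum_of_subset_of_nonneg hsub
          (fun t _ _ => le_trans (by norm_num) (hxhalf t))
  refine ⟨fun e' => ?_, fun S _ hSne hSuniv => ?_, fun v _ => ?_⟩
  · simp only [hxdef]
    split
    · norm_num
    · split <;> norm_num
  · -- cut constraints
    obtain ⟨u, hu⟩ := hSne
    have hex : ∃ w, w ∉ S := by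
      by_contra hc
      push_neg at hc
      exact hSuniv (Finset.eq_univ_iff_forall.mpr hc)
    obtain ⟨w, hw⟩ := hex
    have huw : u ≠ w := fun h => hw (h ▸ hu)
    have hwu : w ≠ u := fun h => (h ▸ hw) hu
    constructor
    · obtain ⟨p, q, -, -, hph, hpl, hqh, hql, hpE, hqE, hdisj⟩ := hpaths u w huw
      obtain ⟨a1, ha1, ha1S⟩ := crossing S p u w hph hpl hu hw
      obtain ⟨a2, ha2, ha2S⟩ := crossing S q u w hqh hql hu hw
      have hne12 : a1 ≠ a2 := fun h => hdisj ha1 (h ▸ ha2)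
      refine hcut _ ⟨a1, hpE a1 ha1⟩ ⟨a2, hqE a2 ha2⟩
        (Finset.mem_filter.mpr ⟨Finset.mem_attach _ _, ha1S⟩)
        (Finset.mem_filter.mpr ⟨Finset.mem_attach _ _, ha2S⟩)
        (fun h => hne12 (congrArg Subtype.val h))
    · obtain ⟨p, q, -, -, hph, hpl, hqh, hql, hpE, hqE, hdisj⟩ := hpaths w u hwu
      obtain ⟨a1, ha1, ha1S⟩ := crossing Sᶜ p w u hph hpl
        (Finset.mem_compl.mpr hw) (by simpa using hu)
      obtain ⟨a2, ha2, ha2S⟩ := crossing Sᶜ q w u hqh hql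
        (Finset.mem_compl.mpr hw) (by simpa using hu)
      have hne12 : a1 ≠ a2 := fun h => hdisj ha1 (h ▸ ha2)
      have hm1 : a1.1 ∉ S ∧ a1.2 ∈ S := by
        simpa [Finset.mem_compl] using ha1S
      have hm2 : a2.1 ∉ S ∧ a2.2 ∈ S := by
        simpa [Finset.mem_compl] using ha2S
      refine hcut _ ⟨a1, hpE a1 ha1⟩ ⟨a2, hqE a2 ha2⟩
        (Finset.mem_filter.mpr ⟨Finset.mem_attach _ _, hm1⟩)
        (Finset.mem_filter.mpr ⟨Finset.mem_attach _ _, hm2⟩)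
        (fun h => hne12 (congrArg Subtype.val h))
  · -- balance
    set g : V × V → ℝ := fun a => if a = e then (1 : ℝ)
        else if a ∈ F then 1 / 2 else 3 / 4 with hgdef
    have hgsum : ∀ A : Finset (V × V), ∑ a ∈ A, g a
        = 3 / 4 * A.card + 1 / 4 * ((A.filter (fun a => a = e)).card : ℝ)
          - 1 / 4 * ((A.filter (fun a => a ∈ F)).card : ℝ) := by
      intro A
      have hg : ∀ a ∈ A, g a = 3 / 4 + (if a = e then (1 : ℝ) / 4 else 0)
          - (if a ∈ F then (1 : ℝ) / 4 else 0) := by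
        intro a _
        by_cases h1 : a = e
        · subst h1
          simp [hgdef, heF]
          norm_num
        · by_cases h2 : a ∈ F <;> simp [hgdef, h1, h2] <;> norm_num
      rw [Finset.sum_congr rfl hg]
      rw [Finset.sum_sub_distrib, Finset.sum_add_distrib, Finset.sum_const,
        ← Finset.sum_filter, ← Finset.sum_filter, Finset.sum_const, Finset.sum_const]
      push_cast
      ring
    have houtf : E.attach.filter
          (fun e' : ↥E => e'.val.1 ∈ ({v} : Finset V) ∧ e'.val.2 ∉ ({v} : Finset V))
        = E.attach.filter (fun e' : ↥E => e'.val.1 = v) := by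
      apply Finset.filter_congr
      intro t _
      simp only [Finset.mem_singleton]
      constructor
      · exact fun h => h.1
      · exact fun h => ⟨h, fun h2 => hloop t.val t.2 (h.trans h2.symm)⟩
    have hinf : E.attach.filter
          (fun e' : ↥E => e'.val.1 ∉ ({v} : Finset V) ∧ e'.val.2 ∈ ({v} : Finset V))
        = E.attach.filter (fun e' : ↥E => e'.val.2 = v) := by
      apply Finset.filter_congr
      intro t _
      simp only [Finset.mem_singleton]
      constructor
      · exact fun h => h.2
      · exact fun h => ⟨fun h2 => hloop t.val t.2 (h2.trans h.symm), h⟩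
    have hout : outCut E x {v} = ∑ a ∈ E.filter (fun a => a.1 = v), g a := by
      rw [outCut, houtf]
      exact cut_sum E g (fun a => a.1 = v)
    have hin : inCut E x {v} = ∑ a ∈ E.filter (fun a => a.2 = v), g a := by
      rw [inCut, hinf]
      exact cut_sum E g (fun a => a.2 = v)
    have hcard1 : ((E.filter (fun a => a.1 = v)).filter (fun a => a = e)).card
        = if e.1 = v then 1 else 0 := by
      by_cases h : e.1 = v
      · rw [Finset.filter_eq', if_pos (Finset.mem_filter.mpr ⟨he, h⟩), if_pos h,
          Finset.card_singleton]
      · have hm : e ∉ E.filter (fun a => a.1 = v) :=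
          fun hc => h (Finset.mem_filter.mp hc).2
        rw [Finset.filter_eq', if_neg hm, if_neg h, Finset.card_empty]
    have hcard2 : ((E.filter (fun a => a.2 = v)).filter (fun a => a = e)).card
        = if e.2 = v then 1 else 0 := by
      by_cases h : e.2 = v
      · rw [Finset.filter_eq', if_pos (Finset.mem_filter.mpr ⟨he, h⟩), if_pos h,
          Finset.card_singleton]
      · have hm : e ∉ E.filter (fun a => a.2 = v) :=
          fun hc => h (Finset.mem_filter.mp hc).2
        rw [Finset.filter_eq', if_neg hm, if_neg h, Finset.card_empty]
    have hFf1 : (E.filter (fun a => a.1 = v)).filter (fun a => a ∈ F)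
        = F.filter (fun a => a.1 = v) := by
      ext a
      simp only [Finset.mem_filter]
      exact ⟨fun h => ⟨h.2, h.1.2⟩, fun h => ⟨⟨hFE h.1, h.2⟩, h.1⟩⟩
    have hFf2 : (E.filter (fun a => a.2 = v)).filter (fun a => a ∈ F)
        = F.filter (fun a => a.2 = v) := by
      ext a
      simp only [Finset.mem_filter]
      exact ⟨fun h => ⟨h.2, h.1.2⟩, fun h => ⟨⟨hFE h.1, h.2⟩, h.1⟩⟩
    have hdo : (E.filter (fun a => a.1 = v)).card = 2 := (hdeg v).1
    have hdi : (E.filter (fun a => a.2 = v)).card = 2 := (hdeg v).2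
    have hfc := frame_count hF v
    rw [hout, hin, hgsum, hgsum, hcard1, hcard2, hFf1, hFf2, hdo, hdi]
    by_cases h1 : e.1 = v <;> by_cases h2 : e.2 = v <;>
      simp only [h1, h2, if_true, if_false] at hfc ⊢ <;>
      [skip; skip; skip; skip] <;>
      · have : ((F.filter (fun a => a.1 = v)).card : ℝ)
            + (if e.2 = v then (1:ℝ) else 0)
            = ((F.filter (fun a => a.2 = v)).card : ℝ)
            + (if e.1 = v then (1:ℝ) else 0) := by
          simp only [h1, h2, if_true, if_false]
          exact_mod_cast hfc
        simp only [h1, h2, if_true, if_false] at this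
        linarith

end TSPGap
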